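/- Let E ⊂ ℝ be closed, non-empty, |E| = 0, and Q₀ a cube (interval) intersecting E. Define for t ∈ (0,1) the connected-component analogues L̃_{Q₀}(t) = sup{L ≥ 0 : Σ_{I∈C_E(Q₀), |I|≥L}|I| ≥ t|Q₀|} and S̃_{Q₀}(t) = inf{L ≥ 0 : Σ_{I∈C_E(Q₀), |I|≤L}|I| ≥ t|Q₀|}, where C_E(Q₀) is the set of connected components of Q₀° \ E. Then for 0 < t' < t < 1: 𝓛_{Q₀}(t) ≤ L̃_{Q₀}(t) ≤ 4 𝓛_{Q₀}(t/4), and there is a constant C(t,t') > 0 with C(t,t') S̃_{Q₀}(t') ≤ 𝓢_{Q₀}(t) ≤ S̃_{Q₀}(t). -/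

import Mathlib

open MeasureTheory Set
open scoped Classical

/-- A half-open interval (one-dimensional cube) in `ℝ`. -/
structure Cube1 where
  a : ℝ
  l : ℝ
  l_pos : 0 < l

namespace Cube1
def carrier (Q : Cube1) : Set ℝ := Set.Ico Q.a (Q.a + Q.l)
def vol (Q : Cube1) : ℝ := Q.l
end Cube1

/-- `Q` is a dyadic subinterval of `Q₀` of generation `j`. -/
def IsDyadic (Q₀ Q : Cube1) (j : ℕ) : Prop :=
  Q.l = Q₀.l / 2 ^ j ∧ ∃ k : ℕ, k < 2 ^ j ∧ Q.a = Q₀.a + (k : ℝ) * Q₀.l / 2 ^ j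

def dyadicFamily (Q₀ : Cube1) : Set Cube1 := {Q | ∃ j, IsDyadic Q₀ Q j}

def IsParent (Q₀ P Q : Cube1) : Prop :=
  ∃ j : ℕ, IsDyadic Q₀ Q (j + 1) ∧ IsDyadic Q₀ P j ∧ Q.carrier ⊆ P.carrier

/-- The family `D_E(Q₀)` of maximal dyadic subintervals of `Q₀` avoiding `E` whose
dyadic parent meets `E`. -/
def DE (E : Set ℝ) (Q₀ : Cube1) : Set Cube1 :=
  {Q | Q ∈ dyadicFamily Q₀ ∧ Q.carrier ∩ E = ∅ ∧
    ∀ P : Cube1, IsParent Q₀ P Q → (P.carrier ∩ E).Nonempty}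

noncomputable def sumGE (E : Set ℝ) (Q₀ : Cube1) (L : ℝ) : ℝ :=
  ∑' Q : {Q : Cube1 // Q ∈ DE E Q₀ ∧ L ≤ Q.l}, (Q : Cube1).vol

noncomputable def sumLE (E : Set ℝ) (Q₀ : Cube1) (L : ℝ) : ℝ :=
  ∑' Q : {Q : Cube1 // Q ∈ DE E Q₀ ∧ Q.l ≤ L}, (Q : Cube1).vol

def Lset (t : ℝ) (Q₀ : Cube1) (E : Set ℝ) : Set ℝ :=
  {L | 0 ≤ L ∧ t * Q₀.vol ≤ sumGE E Q₀ L}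

def Sset (t : ℝ) (Q₀ : Cube1) (E : Set ℝ) : Set ℝ :=
  {L | 0 ≤ L ∧ t * Q₀.vol ≤ sumLE E Q₀ L}

noncomputable def Lfun (E : Set ℝ) (Q₀ : Cube1) (t : ℝ) : ℝ := sSup (Lset t Q₀ E)

noncomputable def Sfun (E : Set ℝ) (Q₀ : Cube1) (t : ℝ) : ℝ := sInf (Sset t Q₀ E)

/-- The connected components of `Q₀° \ E`. -/
def comps (E : Set ℝ) (Q₀ : Cube1) : Set (Set ℝ) :=
  {I | ∃ x ∈ interior Q₀.carrier \ E, I = connectedComponentIn (interior Q₀.carrier \ E) x}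

/-- The length of a measurable subset of `ℝ`. -/
noncomputable def len (I : Set ℝ) : ℝ := (volume I).toReal

noncomputable def csumGE (E : Set ℝ) (Q₀ : Cube1) (L : ℝ) : ℝ :=
  ∑' I : {I : Set ℝ // I ∈ comps E Q₀ ∧ L ≤ len I}, len (I : Set ℝ)

noncomputable def csumLE (E : Set ℝ) (Q₀ : Cube1) (L : ℝ) : ℝ :=
  ∑' I : {I : Set ℝ // I ∈ comps E Q₀ ∧ len I ≤ L}, len (I : Set ℝ)

/-- `L̃_{Q₀}(t)`, the connected-component analogue of `𝓛_{Q₀}(t)`. -/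
noncomputable def Ltil (E : Set ℝ) (Q₀ : Cube1) (t : ℝ) : ℝ :=
  sSup {L | 0 ≤ L ∧ t * Q₀.vol ≤ csumGE E Q₀ L}

/-- `S̃_{Q₀}(t)`, the connected-component analogue of `𝓢_{Q₀}(t)`. -/
noncomputable def Stil (E : Set ℝ) (Q₀ : Cube1) (t : ℝ) : ℝ :=
  sInf {L | 0 ≤ L ∧ t * Q₀.vol ≤ csumLE E Q₀ L}

lemma Cube1.ext' {Q Q' : Cube1} (h1 : Q.a = Q'.a) (h2 : Q.l = Q'.l) : Q = Q' := by
  cases Q; cases Q'; simp_all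

lemma Cube1.mem_carrier {Q : Cube1} {x : ℝ} : x ∈ Q.carrier ↔ Q.a ≤ x ∧ x < Q.a + Q.l :=
  Iff.rfl

/-- The generation-`j` dyadic cube containing `x`. -/
noncomputable def gcube (Q₀ : Cube1) (j : ℕ) (x : ℝ) : Cube1 :=
  ⟨Q₀.a + (⌊(x - Q₀.a) * 2 ^ j / Q₀.l⌋₊ : ℝ) * Q₀.l / 2 ^ j, Q₀.l / 2 ^ j, by
    have := Q₀.l_pos; positivity⟩

lemma gcube_isDyadic {Q₀ : Cube1} {x : ℝ} (hx : x ∈ Q₀.carrier) (j : ℕ) :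
    IsDyadic Q₀ (gcube Q₀ j x) j := by
  obtain ⟨h1, h2⟩ := Cube1.mem_carrier.1 hx
  refine ⟨rfl, ⌊(x - Q₀.a) * 2 ^ j / Q₀.l⌋₊, ?_, rfl⟩
  have hl := Q₀.l_pos
  have h2j : (0:ℝ) < 2 ^ j := by positivity
  have hy : (x - Q₀.a) * 2 ^ j / Q₀.l < 2 ^ j := by
    rw [div_lt_iff₀ hl]; nlinarith
  have : ⌊(x - Q₀.a) * 2 ^ j / Q₀.l⌋₊ < 2 ^ j := by
    apply Nat.floor_lt (div_nonneg (mul_nonneg (by linarith) (by positivity)) hl.le) |>.2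
    push_cast; exact hy
  exact this

lemma mem_gcube {Q₀ : Cube1} {x : ℝ} (hx : x ∈ Q₀.carrier) (j : ℕ) :
    x ∈ (gcube Q₀ j x).carrier := by
  obtain ⟨h1, h2⟩ := Cube1.mem_carrier.1 hx
  have hl := Q₀.l_pos
  have h2j : (0:ℝ) < 2 ^ j := by positivity
  set y := (x - Q₀.a) * 2 ^ j / Q₀.l with hy
  have hy0 : (0:ℝ) ≤ y := div_nonneg (mul_nonneg (by linarith) (by positivity)) hl.le
  have hfl : (⌊y⌋₊ : ℝ) * Q₀.l ≤ (x - Q₀.a) * 2 ^ j := by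
    have := Nat.floor_le hy0
    calc (⌊y⌋₊ : ℝ) * Q₀.l ≤ y * Q₀.l := by nlinarith
      _ = (x - Q₀.a) * 2 ^ j := by rw [hy]; field_simp
  have hfu : (x - Q₀.a) * 2 ^ j < ((⌊y⌋₊ : ℝ) + 1) * Q₀.l := by
    have := Nat.lt_floor_add_one y
    calc (x - Q₀.a) * 2 ^ j = y * Q₀.l := by rw [hy]; field_simp
      _ < ((⌊y⌋₊ : ℝ) + 1) * Q₀.l := by nlinarith
  constructor
  · show Q₀.a + (⌊y⌋₊ : ℝ) * Q₀.l / 2 ^ j ≤ x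
    rw [← sub_nonneg]
    have heq : x - (Q₀.a + (⌊y⌋₊ : ℝ) * Q₀.l / 2 ^ j) = ((x - Q₀.a) * 2 ^ j - (⌊y⌋₊ : ℝ) * Q₀.l) / 2 ^ j := by
      field_simp; ring
    rw [heq]
    have h0 : (0:ℝ) ≤ (x - Q₀.a) * 2 ^ j - (⌊y⌋₊ : ℝ) * Q₀.l := by linarith
    exact div_nonneg h0 h2j.le
  · show x < Q₀.a + (⌊y⌋₊ : ℝ) * Q₀.l / 2 ^ j + Q₀.l / 2 ^ j
    rw [← sub_pos]
    have heq : Q₀.a + (⌊y⌋₊ : ℝ) * Q₀.l / 2 ^ j + Q₀.l / 2 ^ j - x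
        = (((⌊y⌋₊ : ℝ) + 1) * Q₀.l - (x - Q₀.a) * 2 ^ j) / 2 ^ j := by
      field_simp; ring
    rw [heq]
    have h0 : (0:ℝ) < ((⌊y⌋₊ : ℝ) + 1) * Q₀.l - (x - Q₀.a) * 2 ^ j := by linarith
    exact div_pos h0 h2j

lemma gcube_unique {Q₀ Q : Cube1} {x : ℝ} {j : ℕ} (hQ : IsDyadic Q₀ Q j)
    (hx : x ∈ Q.carrier) : Q = gcube Q₀ j x := by
  obtain ⟨hl, k, hk, ha⟩ := hQ
  have hlpos := Q₀.l_pos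
  have h2j : (0:ℝ) < 2 ^ j := by positivity
  obtain ⟨h1, h2⟩ := Cube1.mem_carrier.1 hx
  rw [ha] at h1
  rw [ha, hl] at h2
  have hd' : (k:ℝ) * Q₀.l ≤ (x - Q₀.a) * 2 ^ j := by
    have h1' : (k:ℝ) * Q₀.l / 2 ^ j ≤ x - Q₀.a := by linarith
    calc (k:ℝ) * Q₀.l = ((k:ℝ) * Q₀.l / 2 ^ j) * 2 ^ j := by field_simp
      _ ≤ (x - Q₀.a) * 2 ^ j := by nlinarith
  have hu' : (x - Q₀.a) * 2 ^ j < ((k:ℝ) + 1) * Q₀.l := by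
    have h2' : x - Q₀.a < (k:ℝ) * Q₀.l / 2 ^ j + Q₀.l / 2 ^ j := by linarith
    calc (x - Q₀.a) * 2 ^ j < ((k:ℝ) * Q₀.l / 2 ^ j + Q₀.l / 2 ^ j) * 2 ^ j := by nlinarith
      _ = ((k:ℝ) + 1) * Q₀.l := by field_simp
  have hx0 : (0:ℝ) ≤ x - Q₀.a := by
    have : (0:ℝ) ≤ (k:ℝ) * Q₀.l / 2 ^ j := by positivity
    linarith
  have hkey : k = ⌊(x - Q₀.a) * 2 ^ j / Q₀.l⌋₊ := by
    symm
    rw [Nat.floor_eq_iff (div_nonneg (mul_nonneg hx0 (by positivity)) hlpos.le)]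
    constructor
    · rw [le_div_iff₀ hlpos]
      exact hd'
    · rw [div_lt_iff₀ hlpos]
      push_cast
      exact hu'
  refine Cube1.ext' ?_ ?_
  · rw [ha, hkey]; rfl
  · rw [hl]; rfl

lemma isDyadic_l {Q₀ Q : Cube1} {j : ℕ} (h : IsDyadic Q₀ Q j) : Q.l = Q₀.l / 2 ^ j := h.1

lemma isDyadic_l_le {Q₀ Q : Cube1} {j : ℕ} (h : IsDyadic Q₀ Q j) : Q.l ≤ Q₀.l := by
  rw [h.1]
  have := Q₀.l_pos
  have h1 : (1:ℝ) ≤ 2 ^ j := one_le_pow₀ (by norm_num)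
  rw [div_le_iff₀ (by positivity)]
  nlinarith

lemma gen_unique {Q₀ Q : Cube1} {i j : ℕ} (hi : IsDyadic Q₀ Q i) (hj : IsDyadic Q₀ Q j) :
    i = j := by
  have h := hi.1.symm.trans hj.1
  have hl := Q₀.l_pos
  rw [div_eq_div_iff (by positivity) (by positivity)] at h
  have h2 : (2:ℝ) ^ j = 2 ^ i := mul_left_cancel₀ hl.ne' h
  exact (Nat.pow_right_injective (le_refl 2) (show 2 ^ j = 2 ^ i by exact_mod_cast h2)).symm

lemma isDyadic_carrier_subset {Q₀ Q : Cube1} {j : ℕ} (h : IsDyadic Q₀ Q j) :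
    Q.carrier ⊆ Q₀.carrier := by
  obtain ⟨hl, k, hk, ha⟩ := h
  have hlp := Q₀.l_pos
  have h2j : (0:ℝ) < 2 ^ j := by positivity
  have hk1 : ((k:ℝ) + 1) ≤ 2 ^ j := by exact_mod_cast Nat.succ_le_of_lt hk
  intro y hy
  obtain ⟨h1, h2⟩ := Cube1.mem_carrier.1 hy
  rw [ha] at h1
  rw [ha, hl] at h2
  refine ⟨?_, ?_⟩
  · have h0 : (0:ℝ) ≤ (k:ℝ) * Q₀.l / 2 ^ j := by positivity
    show Q₀.a ≤ y
    linarith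
  · have hs : (k:ℝ) * Q₀.l / 2 ^ j + Q₀.l / 2 ^ j ≤ Q₀.l := by
      rw [← add_div, div_le_iff₀ h2j]
      nlinarith
    show y < Q₀.a + Q₀.l
    linarith

lemma dyadic_nested {Q₀ Q Q' : Cube1} {i j : ℕ} (hij : i ≤ j) (hQ : IsDyadic Q₀ Q i)
    (hQ' : IsDyadic Q₀ Q' j) {x : ℝ} (hx : x ∈ Q.carrier) (hx' : x ∈ Q'.carrier) :
    Q'.carrier ⊆ Q.carrier := by
  obtain ⟨hl, k, hk, ha⟩ := hQ
  obtain ⟨hl', k', hk', ha'⟩ := hQ'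
  have hlp := Q₀.l_pos
  set c : ℝ := Q₀.l / 2 ^ j with hc
  have hcpos : 0 < c := by positivity
  have hmc : Q₀.l / 2 ^ i = (2 ^ (j - i) : ℕ) * c := by
    have h2 : (2:ℝ) ^ j = 2 ^ (j - i) * 2 ^ i := by
      rw [← pow_add]; congr 1; omega
    rw [hc]
    push_cast
    rw [h2]
    field_simp
  set m : ℕ := 2 ^ (j - i) with hm
  have hQa : Q.a = Q₀.a + ((k * m : ℕ) : ℝ) * c := by
    rw [ha]
    have : (k:ℝ) * Q₀.l / 2 ^ i = (k:ℝ) * (Q₀.l / 2 ^ i) := by ring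
    rw [this, hmc]
    push_cast
    ring
  have hQl : Q.l = (m:ℝ) * c := by rw [hl, hmc]
  obtain ⟨h1, h2⟩ := Cube1.mem_carrier.1 hx
  obtain ⟨h1', h2'⟩ := Cube1.mem_carrier.1 hx'
  rw [hQa] at h1
  rw [hQa, hQl] at h2
  rw [ha'] at h1'
  rw [ha', hl'] at h2'
  have hb1' : Q₀.a + (k':ℝ) * c ≤ x := by
    rw [hc]; convert h1' using 2; ring
  have hb2' : x < Q₀.a + (k':ℝ) * c + c := by
    have : (k':ℝ) * Q₀.l / 2 ^ j = (k':ℝ) * c := by rw [hc]; ring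
    rw [this] at h2'
    exact h2'
  -- integer comparisons
  have e1 : k * m ≤ k' := by
    have : ((k * m : ℕ) : ℝ) * c < ((k':ℝ) + 1) * c := by nlinarith
    have : ((k * m : ℕ) : ℝ) < (k':ℝ) + 1 := lt_of_mul_lt_mul_right this hcpos.le
    have : k * m < k' + 1 := by exact_mod_cast this
    omega
  have e2 : k' + 1 ≤ k * m + m := by
    have : (k':ℝ) * c < ((k * m : ℕ) : ℝ) * c + (m:ℝ) * c := by nlinarith
    have : (k':ℝ) < ((k*m : ℕ):ℝ) + (m:ℝ) := by nlinarith
    have : k' < k * m + m := by exact_mod_cast this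
    omega
  intro y hy
  obtain ⟨g1, g2⟩ := Cube1.mem_carrier.1 hy
  rw [ha'] at g1
  rw [ha', hl'] at g2
  have gb1 : Q₀.a + (k':ℝ) * c ≤ y := by rw [hc]; convert g1 using 2; ring
  have gb2 : y < Q₀.a + (k':ℝ) * c + c := by
    have : (k':ℝ) * Q₀.l / 2 ^ j = (k':ℝ) * c := by rw [hc]; ring
    rw [this] at g2
    exact g2
  rw [Cube1.mem_carrier, hQa, hQl]
  constructor
  · have : ((k * m : ℕ):ℝ) * c ≤ (k':ℝ) * c := by
      have : ((k*m : ℕ):ℝ) ≤ (k':ℝ) := by exact_mod_cast e1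
      nlinarith
    linarith
  · have : ((k':ℝ) + 1) * c ≤ ((k * m : ℕ):ℝ) * c + (m:ℝ) * c := by
      have : (k':ℝ) + 1 ≤ ((k*m:ℕ):ℝ) + (m:ℝ) := by exact_mod_cast e2
      nlinarith
    linarith

lemma gcube_zero {Q₀ : Cube1} {x : ℝ} (hx : x ∈ Q₀.carrier) : gcube Q₀ 0 x = Q₀ := by
  obtain ⟨h1, h2⟩ := Cube1.mem_carrier.1 hx
  have hl := Q₀.l_pos
  have hf : ⌊(x - Q₀.a) * 2 ^ 0 / Q₀.l⌋₊ = 0 := by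
    rw [Nat.floor_eq_zero]
    rw [div_lt_iff₀ hl]
    norm_num
    linarith
  refine Cube1.ext' ?_ ?_
  · show Q₀.a + (⌊(x - Q₀.a) * 2 ^ 0 / Q₀.l⌋₊ : ℝ) * Q₀.l / 2 ^ 0 = Q₀.a
    rw [hf]
    norm_num
  · show Q₀.l / 2 ^ 0 = Q₀.l
    norm_num

lemma carrier_diam {Q : Cube1} {x y : ℝ} (hx : x ∈ Q.carrier) (hy : y ∈ Q.carrier) :
    |y - x| < Q.l := by
  obtain ⟨h1, h2⟩ := Cube1.mem_carrier.1 hx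
  obtain ⟨h3, h4⟩ := Cube1.mem_carrier.1 hy
  rw [abs_lt]
  constructor <;> linarith

/-- Existence of a maximal `E`-free dyadic cube containing `x`. -/
lemma exists_DE_mem {E : Set ℝ} {Q₀ : Cube1} (hE : IsClosed E)
    (hQ₀ : (Q₀.carrier ∩ E).Nonempty) {x : ℝ} (hx : x ∈ Q₀.carrier) (hxE : x ∉ E) :
    ∃ Q ∈ DE E Q₀, x ∈ Q.carrier ∧
      ∀ j : ℕ, (gcube Q₀ j x).carrier ∩ E = ∅ →
        (gcube Q₀ j x).l ≤ Q.l ∧ (gcube Q₀ j x).carrier ⊆ Q.carrier := by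
  classical
  have hl := Q₀.l_pos
  -- find some E-free scale
  obtain ⟨ε, hε, hball⟩ := Metric.isOpen_iff.1 hE.isOpen_compl x hxE
  have hex : ∃ j : ℕ, (gcube Q₀ j x).carrier ∩ E = ∅ := by
    obtain ⟨n, hn⟩ : ∃ n : ℕ, Q₀.l / 2 ^ n < ε := by
      obtain ⟨n, hn⟩ := exists_pow_lt_of_lt_one (by positivity : (0:ℝ) < ε / Q₀.l)
        (by norm_num : (1:ℝ)/2 < 1)
      refine ⟨n, ?_⟩
      have h2 : ((1:ℝ)/2) ^ n = 1 / 2 ^ n := by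
        rw [div_pow]; norm_num
      rw [h2, div_lt_div_iff₀ (by positivity) hl] at hn
      rw [div_lt_iff₀ (by positivity : (0:ℝ) < 2 ^ n)]
      nlinarith
    refine ⟨n, ?_⟩
    rw [Set.eq_empty_iff_forall_notMem]
    intro y ⟨hy1, hy2⟩
    have hdist : |y - x| < Q₀.l / 2 ^ n := by
      have := carrier_diam (mem_gcube hx n) hy1
      rwa [show (gcube Q₀ n x).l = Q₀.l / 2 ^ n from rfl] at this
    have : y ∈ Metric.ball x ε := by
      rw [Metric.mem_ball, Real.dist_eq]
      linarith [hdist]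
    exact hball this hy2
  set j₀ := Nat.find hex with hj₀
  have hfree := Nat.find_spec hex
  have hne0 : j₀ ≠ 0 := by
    intro h0
    have hfree' : (gcube Q₀ j₀ x).carrier ∩ E = ∅ := hfree
    rw [h0, gcube_zero hx] at hfree'
    rw [hfree'] at hQ₀
    exact Set.not_nonempty_empty hQ₀
  obtain ⟨m, hm⟩ : ∃ m, j₀ = m + 1 := ⟨j₀ - 1, by omega⟩
  refine ⟨gcube Q₀ j₀ x, ⟨⟨j₀, gcube_isDyadic hx j₀⟩, hfree, ?_⟩, mem_gcube hx j₀, ?_⟩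
  · intro P hPar
    obtain ⟨j', hQd, hPd, hsub⟩ := hPar
    have : j' + 1 = j₀ := gen_unique hQd (gcube_isDyadic hx j₀)
    have hj' : j' = m := by omega
    have hxP : x ∈ P.carrier := hsub (mem_gcube hx j₀)
    have hPeq : P = gcube Q₀ j' x := gcube_unique hPd hxP
    rw [Set.nonempty_iff_ne_empty]
    intro hPE
    have : ¬ ((gcube Q₀ j' x).carrier ∩ E = ∅) := Nat.find_min hex (by omega)
    rw [← hPeq] at this
    exact this hPE
  · intro j hj
    have hle : j₀ ≤ j := Nat.find_min' hex hj
    constructor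
    · show Q₀.l / 2 ^ j ≤ Q₀.l / 2 ^ j₀
      apply div_le_div_of_nonneg_left hl.le (by positivity)
      exact pow_le_pow_right₀ (by norm_num) hle
    · exact dyadic_nested hle (gcube_isDyadic hx j₀) (gcube_isDyadic hx j)
        (mem_gcube hx j₀) (mem_gcube hx j)

lemma DE_parent {E : Set ℝ} {Q₀ : Cube1} (hQ₀ : (Q₀.carrier ∩ E).Nonempty)
    {Q : Cube1} (hQ : Q ∈ DE E Q₀) :
    ∃ P : Cube1, IsParent Q₀ P Q ∧ P.l = 2 * Q.l ∧ (P.carrier ∩ E).Nonempty := by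
  obtain ⟨⟨j, hj⟩, hfree, hmax⟩ := hQ
  have hl := Q₀.l_pos
  have hne0 : j ≠ 0 := by
    intro h0
    subst h0
    obtain ⟨hjl, k, hk, ha⟩ := hj
    interval_cases k
    have hcar : Q.carrier = Q₀.carrier := by
      unfold Cube1.carrier
      rw [ha, hjl]
      norm_num
    rw [hcar] at hfree
    rw [hfree] at hQ₀
    exact Set.not_nonempty_empty hQ₀
  obtain ⟨m, hm⟩ : ∃ m, j = m + 1 := ⟨j - 1, by omega⟩
  subst hm
  have hQa : Q.a ∈ Q.carrier := by
    refine ⟨le_refl _, ?_⟩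
    have := Q.l_pos
    linarith
  have hQaQ₀ : Q.a ∈ Q₀.carrier := isDyadic_carrier_subset hj hQa
  set P := gcube Q₀ m Q.a with hP
  have hPd := gcube_isDyadic hQaQ₀ m
  have hsub : Q.carrier ⊆ P.carrier :=
    dyadic_nested (by omega) hPd hj (mem_gcube hQaQ₀ m) hQa
  have hPar : IsParent Q₀ P Q := ⟨m, hj, hPd, hsub⟩
  refine ⟨P, hPar, ?_, hmax P hPar⟩
  rw [hj.1, hPd.1]
  rw [pow_succ]
  field_simp

lemma DE_disjoint {E : Set ℝ} {Q₀ : Cube1} (hQ₀ : (Q₀.carrier ∩ E).Nonempty)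
    {Q Q' : Cube1} (hQ : Q ∈ DE E Q₀) (hQ' : Q' ∈ DE E Q₀) (hne : Q ≠ Q') :
    Disjoint Q.carrier Q'.carrier := by
  rw [Set.disjoint_left]
  intro z hz hz'
  obtain ⟨⟨g, hg⟩, hfree, hmax⟩ := hQ
  obtain ⟨⟨g', hg'⟩, hfree', hmax'⟩ := hQ'
  -- auxiliary: strictly smaller generation leads to contradiction
  have aux : ∀ (A B : Cube1) (i j : ℕ), IsDyadic Q₀ A i → IsDyadic Q₀ B j →
      A.carrier ∩ E = ∅ → (∀ P, IsParent Q₀ P B → (P.carrier ∩ E).Nonempty) →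
      z ∈ A.carrier → z ∈ B.carrier → i < j → False := by
    intro A B i j hA hB hAfree hBmax hzA hzB hij
    obtain ⟨m, hm⟩ : ∃ m, j = m + 1 := ⟨j - 1, by omega⟩
    subst hm
    have hzQ₀ : z ∈ Q₀.carrier := isDyadic_carrier_subset hA hzA
    set P := gcube Q₀ m z with hP
    have hPd := gcube_isDyadic hzQ₀ m
    have hsub : B.carrier ⊆ P.carrier :=
      dyadic_nested (by omega) hPd hB (mem_gcube hzQ₀ m) hzB
    have hPA : P.carrier ⊆ A.carrier :=
      dyadic_nested (by omega) hA hPd hzA (mem_gcube hzQ₀ m)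
    have hPar : IsParent Q₀ P B := ⟨m, hB, hPd, hsub⟩
    obtain ⟨w, hw1, hw2⟩ := hBmax P hPar
    have : w ∈ A.carrier ∩ E := ⟨hPA hw1, hw2⟩
    rw [hAfree] at this
    exact this
  rcases lt_trichotomy g g' with h | h | h
  · exact aux Q Q' g g' hg hg' hfree hmax' hz hz' h
  · subst h
    apply hne
    rw [gcube_unique hg hz, gcube_unique hg' hz']
  · exact aux Q' Q g' g hg' hg hfree' hmax hz' hz h

lemma DE_countable (E : Set ℝ) (Q₀ : Cube1) : (DE E Q₀).Countable := by
  have h1 : DE E Q₀ ⊆ ⋃ (j : ℕ) (k : ℕ),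
      {(⟨Q₀.a + (k:ℝ) * Q₀.l / 2 ^ j, Q₀.l / 2 ^ j, by have := Q₀.l_pos; positivity⟩ : Cube1)} := by
    rintro Q ⟨⟨j, hjl, k, hk, ha⟩, -, -⟩
    refine Set.mem_iUnion.2 ⟨j, Set.mem_iUnion.2 ⟨k, ?_⟩⟩
    rw [Set.mem_singleton_iff]
    exact Cube1.ext' ha hjl
  exact Set.Countable.mono h1 (Set.countable_iUnion fun j =>
    Set.countable_iUnion fun k => Set.countable_singleton _)

lemma DE_cover {E : Set ℝ} {Q₀ : Cube1} (hE : IsClosed E)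
    (hQ₀ : (Q₀.carrier ∩ E).Nonempty) :
    Q₀.carrier \ E ⊆ ⋃ Q ∈ DE E Q₀, Q.carrier := by
  intro x ⟨hx, hxE⟩
  obtain ⟨Q, hQ, hxQ, -⟩ := exists_DE_mem hE hQ₀ hx hxE
  exact Set.mem_biUnion hQ hxQ

lemma DE_union_subset {E : Set ℝ} {Q₀ : Cube1} :
    (⋃ Q ∈ DE E Q₀, Cube1.carrier Q) ⊆ Q₀.carrier := by
  intro x hx
  obtain ⟨Q, hQ, hxQ⟩ := Set.mem_iUnion₂.1 hx
  exact isDyadic_carrier_subset hQ.1.choose_spec hxQ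

lemma interior_carrier (Q₀ : Cube1) :
    interior Q₀.carrier = Set.Ioo Q₀.a (Q₀.a + Q₀.l) := by
  unfold Cube1.carrier
  exact interior_Ico

lemma O_open {E : Set ℝ} (hE : IsClosed E) (Q₀ : Cube1) :
    IsOpen (interior Q₀.carrier \ E) :=
  isOpen_interior.sdiff hE

lemma comps_eq_ccIn {E : Set ℝ} {Q₀ : Cube1} {I : Set ℝ} (hI : I ∈ comps E Q₀)
    {x : ℝ} (hx : x ∈ I) :
    connectedComponentIn (interior Q₀.carrier \ E) x = I := by
  obtain ⟨y, hy, rfl⟩ := hI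
  exact (connectedComponentIn_eq hx).symm

lemma comps_subset {E : Set ℝ} {Q₀ : Cube1} {I : Set ℝ} (hI : I ∈ comps E Q₀) :
    I ⊆ interior Q₀.carrier \ E := by
  obtain ⟨y, hy, rfl⟩ := hI
  exact connectedComponentIn_subset _ _

lemma comps_nonempty {E : Set ℝ} {Q₀ : Cube1} {I : Set ℝ} (hI : I ∈ comps E Q₀) :
    I.Nonempty := by
  obtain ⟨y, hy, rfl⟩ := hI
  exact ⟨y, mem_connectedComponentIn hy⟩

lemma comps_disjoint {E : Set ℝ} {Q₀ : Cube1} {I I' : Set ℝ} (hI : I ∈ comps E Q₀)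
    (hI' : I' ∈ comps E Q₀) (hne : I ≠ I') : Disjoint I I' := by
  rw [Set.disjoint_left]
  intro z hz hz'
  exact hne ((comps_eq_ccIn hI hz).symm.trans (comps_eq_ccIn hI' hz'))

lemma comps_union {E : Set ℝ} {Q₀ : Cube1} :
    ⋃₀ comps E Q₀ = interior Q₀.carrier \ E := by
  apply Set.Subset.antisymm
  · intro x ⟨I, hI, hxI⟩
    exact comps_subset hI hxI
  · intro x hx
    exact ⟨connectedComponentIn (interior Q₀.carrier \ E) x, ⟨x, hx, rfl⟩,
      mem_connectedComponentIn hx⟩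

/-- Structure theorem: every component is a bounded open interval. -/
lemma comps_struct {E : Set ℝ} (hE : IsClosed E) {Q₀ : Cube1} {I : Set ℝ}
    (hI : I ∈ comps E Q₀) :
    ∃ α β : ℝ, Q₀.a ≤ α ∧ α < β ∧ β ≤ Q₀.a + Q₀.l ∧ I = Set.Ioo α β := by
  have hIO := comps_subset hI
  have hIoo : I ⊆ Set.Ioo Q₀.a (Q₀.a + Q₀.l) := fun x hx => by
    have := hIO hx
    rw [interior_carrier] at this
    exact this.1
  have hopen : IsOpen I := by
    obtain ⟨y, hy, rfl⟩ := hI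
    exact (O_open hE Q₀).connectedComponentIn
  have hne := comps_nonempty hI
  have hpre : IsPreconnected I := by
    obtain ⟨y, hy, rfl⟩ := hI
    exact isPreconnected_connectedComponentIn
  have hbdd : BddAbove I := ⟨Q₀.a + Q₀.l, fun x hx => (hIoo hx).2.le⟩
  have hbddb : BddBelow I := ⟨Q₀.a, fun x hx => (hIoo hx).1.le⟩
  set α := sInf I with hα
  set β := sSup I with hβ
  have hIcc : I ⊆ Set.Icc α β := fun x hx => ⟨csInf_le hbddb hx, le_csSup hbdd hx⟩
  have hanotin : α ∉ I := by
    intro hmem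
    obtain ⟨ε, hε, hball⟩ := Metric.isOpen_iff.1 hopen α hmem
    have : α - ε/2 ∈ I := hball (by
      rw [Metric.mem_ball, Real.dist_eq]
      rw [abs_lt]
      constructor <;> linarith)
    have := csInf_le hbddb this
    linarith
  have hbnotin : β ∉ I := by
    intro hmem
    obtain ⟨ε, hε, hball⟩ := Metric.isOpen_iff.1 hopen β hmem
    have : β + ε/2 ∈ I := hball (by
      rw [Metric.mem_ball, Real.dist_eq]
      rw [abs_lt]
      constructor <;> linarith)
    have := le_csSup hbdd this
    linarith
  have hord : I.OrdConnected := hpre.ordConnected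
  have hIooab : Set.Ioo α β ⊆ I := by
    intro x ⟨hx1, hx2⟩
    obtain ⟨p, hp, hpx⟩ := exists_lt_of_csInf_lt hne hx1
    obtain ⟨q, hq, hxq⟩ := exists_lt_of_lt_csSup hne hx2
    exact hord.out hp hq ⟨hpx.le, hxq.le⟩
  have hIeq : I = Set.Ioo α β := by
    apply Set.Subset.antisymm
    · intro x hx
      obtain ⟨h1, h2⟩ := hIcc hx
      refine ⟨lt_of_le_of_ne h1 ?_, lt_of_le_of_ne h2 ?_⟩
      · intro h; exact hanotin (h ▸ hx)
      · intro h; exact hbnotin (h ▸ hx)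
    · exact hIooab
  obtain ⟨x₀, hx₀⟩ := hne
  have hab : α < β := by
    obtain ⟨h1, h2⟩ := hIcc hx₀
    rcases lt_or_eq_of_le h1 with h | h
    · rcases lt_or_eq_of_le h2 with h' | h'
      · exact h.trans h'
      · exact absurd (h' ▸ hx₀) hbnotin
    · exact absurd (h ▸ hx₀) hanotin
  refine ⟨α, β, ?_, hab, ?_, hIeq⟩
  · apply le_csInf ⟨x₀, hx₀⟩
    intro y hy
    exact (hIoo hy).1.le
  · apply csSup_le ⟨x₀, hx₀⟩
    intro y hy
    exact (hIoo hy).2.le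

lemma comps_countable (E : Set ℝ) (Q₀ : Cube1) (hE : IsClosed E) :
    (comps E Q₀).Countable := by
  have h : comps E Q₀ ⊆
      Set.range (fun q : ℚ => connectedComponentIn (interior Q₀.carrier \ E) (q : ℝ)) := by
    intro I hI
    obtain ⟨α, β, -, hab, -, hIeq⟩ := comps_struct hE hI
    obtain ⟨q, hq1, hq2⟩ := exists_rat_btwn hab
    have hqI : (q : ℝ) ∈ I := by rw [hIeq]; exact ⟨hq1, hq2⟩
    exact ⟨q, comps_eq_ccIn hI hqI⟩
  exact Set.Countable.mono h (Set.countable_range _)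

lemma len_carrier (Q : Cube1) : len Q.carrier = Q.l := by
  unfold len Cube1.carrier
  rw [Real.volume_Ico]
  simp [Q.l_pos.le]

lemma len_Ioo {α β : ℝ} (h : α ≤ β) : len (Set.Ioo α β) = β - α := by
  unfold len
  rw [Real.volume_Ioo, ENNReal.toReal_ofReal (by linarith)]

lemma len_nonneg (I : Set ℝ) : 0 ≤ len I := ENNReal.toReal_nonneg

/-- A canonical point of `Q.carrier ∩ interior Q₀.carrier`. -/
noncomputable def cpt (Q₀ Q : Cube1) : ℝ := max Q.a ((Q₀.a + Q.a + Q.l) / 2)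

lemma cpt_mem {Q₀ Q : Cube1} (hsub : Q.carrier ⊆ Q₀.carrier) :
    cpt Q₀ Q ∈ Q.carrier ∩ interior Q₀.carrier := by
  have hl := Q.l_pos
  have hQa : Q.a ∈ Q.carrier := ⟨le_refl _, by linarith⟩
  have h1 : Q₀.a ≤ Q.a := (hsub hQa).1
  have h2 : Q.a + Q.l ≤ Q₀.a + Q₀.l := by
    by_contra h
    push_neg at h
    have hy : max Q.a (Q₀.a + Q₀.l) ∈ Q.carrier := by
      constructor
      · exact le_max_left _ _
      · exact max_lt (by linarith) (by linarith)
    have := (hsub hy).2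
    have h3 : Q₀.a + Q₀.l ≤ max Q.a (Q₀.a + Q₀.l) := le_max_right _ _
    linarith
  rw [interior_carrier]
  refine ⟨⟨le_max_left _ _, ?_⟩, ?_, ?_⟩
  · apply max_lt (by linarith)
    linarith
  · apply lt_max_iff.2
    right
    linarith
  · apply lt_of_lt_of_le (b := Q.a + Q.l) (max_lt (by linarith) (by linarith)) h2

/-- The connected component containing (most of) a cube of `D_E(Q₀)`. -/
noncomputable def iotaC (E : Set ℝ) (Q₀ Q : Cube1) : Set ℝ :=
  connectedComponentIn (interior Q₀.carrier \ E) (cpt Q₀ Q)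

lemma DE_carrier_inter_sub {E : Set ℝ} {Q₀ Q : Cube1} (hQ : Q ∈ DE E Q₀) :
    Q.carrier ∩ interior Q₀.carrier ⊆ iotaC E Q₀ Q := by
  obtain ⟨⟨j, hj⟩, hfree, -⟩ := hQ
  have hsub := isDyadic_carrier_subset hj
  have hc := cpt_mem hsub
  have hpre : IsPreconnected (Q.carrier ∩ interior Q₀.carrier) := by
    rw [interior_carrier]
    unfold Cube1.carrier
    exact (Set.ordConnected_Ico.inter Set.ordConnected_Ioo).isPreconnected
  have hOsub : Q.carrier ∩ interior Q₀.carrier ⊆ interior Q₀.carrier \ E := by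
    intro y ⟨hy1, hy2⟩
    refine ⟨hy2, fun hyE => ?_⟩
    have : y ∈ Q.carrier ∩ E := ⟨hy1, hyE⟩
    rw [hfree] at this
    exact this
  exact hpre.subset_connectedComponentIn ⟨hc.1, hc.2⟩ hOsub

lemma iotaC_mem_comps {E : Set ℝ} {Q₀ Q : Cube1} (hQ : Q ∈ DE E Q₀) :
    iotaC E Q₀ Q ∈ comps E Q₀ := by
  obtain ⟨⟨j, hj⟩, hfree, -⟩ := hQ
  have hsub := isDyadic_carrier_subset hj
  have hc := cpt_mem hsub
  refine ⟨cpt Q₀ Q, ⟨hc.2, fun hyE => ?_⟩, rfl⟩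
  have : cpt Q₀ Q ∈ Q.carrier ∩ E := ⟨hc.1, hyE⟩
  rw [hfree] at this
  exact this

lemma iotaC_eq_of_mem {E : Set ℝ} {Q₀ Q : Cube1} (hQ : Q ∈ DE E Q₀) {I : Set ℝ}
    (hI : I ∈ comps E Q₀) {x : ℝ} (hxQ : x ∈ Q.carrier) (hxI : x ∈ I) :
    iotaC E Q₀ Q = I := by
  have hxint : x ∈ interior Q₀.carrier := (comps_subset hI hxI).1
  have hxiota : x ∈ iotaC E Q₀ Q := DE_carrier_inter_sub hQ ⟨hxQ, hxint⟩
  exact ((comps_eq_ccIn (iotaC_mem_comps hQ) hxiota).symm).trans (comps_eq_ccIn hI hxI)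

lemma DE_carrier_sub_iotaC {E : Set ℝ} {Q₀ Q : Cube1} (hQ : Q ∈ DE E Q₀) :
    Q.carrier ⊆ iotaC E Q₀ Q ∪ {Q₀.a} := by
  intro y hy
  have hsub := isDyadic_carrier_subset hQ.1.choose_spec
  have hyQ₀ := hsub hy
  by_cases hint : y ∈ interior Q₀.carrier
  · exact Or.inl (DE_carrier_inter_sub hQ ⟨hy, hint⟩)
  · right
    rw [interior_carrier] at hint
    obtain ⟨h1, h2⟩ := Cube1.mem_carrier.1 hyQ₀
    simp only [Set.mem_Ioo, not_and_or, not_lt] at hint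
    rcases hint with h | h
    · exact Set.mem_singleton_iff.2 (le_antisymm h h1)
    · linarith

lemma DE_l_le_len_iotaC {E : Set ℝ} {Q₀ Q : Cube1} (hQ : Q ∈ DE E Q₀) :
    Q.l ≤ len (iotaC E Q₀ Q) := by
  have h1 : Q.carrier ⊆ iotaC E Q₀ Q ∪ {Q₀.a} := DE_carrier_sub_iotaC hQ
  have h2 : volume Q.carrier ≤ volume (iotaC E Q₀ Q) + volume ({Q₀.a} : Set ℝ) :=
    le_trans (measure_mono h1) (measure_union_le _ _)
  rw [Real.volume_singleton, add_zero] at h2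
  have hfin : volume (iotaC E Q₀ Q) ≠ ⊤ := by
    apply lt_top_iff_ne_top.1
    apply lt_of_le_of_lt (measure_mono (comps_subset (iotaC_mem_comps hQ)))
    apply lt_of_le_of_lt (measure_mono (Set.diff_subset))
    rw [interior_carrier, Real.volume_Ioo]
    exact ENNReal.ofReal_lt_top
  calc Q.l = len Q.carrier := (len_carrier Q).symm
    _ ≤ len (iotaC E Q₀ Q) := ENNReal.toReal_le_toReal (by
        rw [← lt_top_iff_ne_top]
        exact lt_of_le_of_lt h2 (lt_top_iff_ne_top.2 hfin)) hfin |>.2 h2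

/-- Master summation lemma. -/
lemma key_sum {ι : Type*} [Countable ι] (f : ι → Set ℝ) (hm : ∀ i, MeasurableSet (f i))
    (hd : Pairwise (Function.onFun Disjoint f)) {A₀ : Set ℝ} (hsub : ∀ i, f i ⊆ A₀)
    (hA₀ : volume A₀ ≠ ⊤) :
    Summable (fun i => len (f i)) ∧
      ∑' i, len (f i) = (volume (⋃ i, f i)).toReal := by
  have hU : volume (⋃ i, f i) = ∑' i, volume (f i) := measure_iUnion hd hm
  have hUA : volume (⋃ i, f i) ≤ volume A₀ := measure_mono (Set.iUnion_subset hsub)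
  have hfin : ∑' i, volume (f i) ≠ ⊤ := by
    rw [← hU]
    exact (lt_of_le_of_lt hUA (lt_top_iff_ne_top.2 hA₀)).ne
  constructor
  · exact ENNReal.summable_toReal hfin
  · rw [hU, ENNReal.tsum_toReal_eq fun i =>
      (lt_of_le_of_lt (measure_mono (hsub i)) (lt_top_iff_ne_top.2 hA₀)).ne]
    rfl

section Repr

variable {E : Set ℝ} {Q₀ : Cube1}

lemma countable_subDE (p : Cube1 → Prop) : Countable {Q : Cube1 // Q ∈ DE E Q₀ ∧ p Q} :=
  (Set.Countable.mono (fun _ h => h.1) (DE_countable E Q₀)).to_subtype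

lemma countable_subComps (hE : IsClosed E) (p : Set ℝ → Prop) :
    Countable {I : Set ℝ // I ∈ comps E Q₀ ∧ p I} :=
  (Set.Countable.mono (fun _ h => h.1) (comps_countable E Q₀ hE)).to_subtype

lemma volume_Q₀_ne_top : volume Q₀.carrier ≠ ⊤ := by
  unfold Cube1.carrier
  rw [Real.volume_Ico]
  exact ENNReal.ofReal_ne_top

lemma DE_carrier_subset {Q : Cube1} (hQ : Q ∈ DE E Q₀) : Q.carrier ⊆ Q₀.carrier :=
  isDyadic_carrier_subset hQ.1.choose_spec

lemma DEsub_repr (hQ₀ : (Q₀.carrier ∩ E).Nonempty) (p : Cube1 → Prop) :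
    Summable (fun Q : {Q : Cube1 // Q ∈ DE E Q₀ ∧ p Q} => (Q : Cube1).vol) ∧
      ∑' Q : {Q : Cube1 // Q ∈ DE E Q₀ ∧ p Q}, (Q : Cube1).vol
        = (volume (⋃ Q : {Q : Cube1 // Q ∈ DE E Q₀ ∧ p Q}, (Q : Cube1).carrier)).toReal := by
  haveI := countable_subDE (E := E) (Q₀ := Q₀) p
  have key := key_sum (fun Q : {Q : Cube1 // Q ∈ DE E Q₀ ∧ p Q} => (Q : Cube1).carrier)
    (fun Q => measurableSet_Ico)
    (fun Q Q' hne => DE_disjoint hQ₀ Q.2.1 Q'.2.1 (fun h => hne (Subtype.ext h)))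
    (fun Q => DE_carrier_subset Q.2.1) volume_Q₀_ne_top
  have hv : ∀ Q : {Q : Cube1 // Q ∈ DE E Q₀ ∧ p Q}, (Q : Cube1).vol = len (Q : Cube1).carrier :=
    fun Q => (len_carrier _).symm
  constructor
  · exact key.1.congr (fun Q => (hv Q).symm)
  · rw [tsum_congr hv]
    exact key.2

lemma comps_subset_Q₀ {I : Set ℝ} (hI : I ∈ comps E Q₀) : I ⊆ Q₀.carrier :=
  fun x hx => interior_subset (comps_subset hI hx).1

lemma compsub_repr (hE : IsClosed E) (p : Set ℝ → Prop) :
    Summable (fun I : {I : Set ℝ // I ∈ comps E Q₀ ∧ p I} => len (I : Set ℝ)) ∧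
      ∑' I : {I : Set ℝ // I ∈ comps E Q₀ ∧ p I}, len (I : Set ℝ)
        = (volume (⋃ I : {I : Set ℝ // I ∈ comps E Q₀ ∧ p I}, (I : Set ℝ))).toReal := by
  haveI := countable_subComps (E := E) (Q₀ := Q₀) hE p
  exact key_sum (fun I : {I : Set ℝ // I ∈ comps E Q₀ ∧ p I} => (I : Set ℝ))
    (fun I => by
      obtain ⟨α, β, -, -, -, hIeq⟩ := comps_struct hE I.2.1
      show MeasurableSet (I : Set ℝ)
      rw [hIeq]; exact measurableSet_Ioo)
    (fun I I' hne => comps_disjoint I.2.1 I'.2.1 (fun h => hne (Subtype.ext h)))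
    (fun I => comps_subset_Q₀ I.2.1) volume_Q₀_ne_top

lemma toReal_mono_union_pt {A B : Set ℝ} {pt : ℝ} (hB : volume B ≠ ⊤) (h : A ⊆ B ∪ {pt}) :
    (volume A).toReal ≤ (volume B).toReal := by
  have h1 : volume A ≤ volume B := by
    calc volume A ≤ volume (B ∪ {pt}) := measure_mono h
      _ ≤ volume B + volume ({pt} : Set ℝ) := measure_union_le _ _
      _ = volume B := by rw [Real.volume_singleton, add_zero]
  exact ENNReal.toReal_mono hB h1

lemma len_le_Q₀ {I : Set ℝ} (hI : I ∈ comps E Q₀) : len I ≤ Q₀.l := by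
  rw [← len_carrier Q₀]
  exact ENNReal.toReal_mono volume_Q₀_ne_top (measure_mono (comps_subset_Q₀ hI))

end Repr

section Comparisons

variable {E : Set ℝ} {Q₀ : Cube1}

lemma sumGE_le_csumGE (hE : IsClosed E) (hQ₀ : (Q₀.carrier ∩ E).Nonempty) (L : ℝ) :
    sumGE E Q₀ L ≤ csumGE E Q₀ L := by
  rw [sumGE, csumGE, (DEsub_repr hQ₀ (fun Q => L ≤ Q.l)).2,
    (compsub_repr hE (fun I => L ≤ len I)).2]
  apply toReal_mono_union_pt (pt := Q₀.a)
  · exact (lt_of_le_of_lt (measure_mono (Set.iUnion_subset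
      (fun I => comps_subset_Q₀ I.2.1))) (lt_top_iff_ne_top.2 volume_Q₀_ne_top)).ne
  · intro x hx
    obtain ⟨Q, hxQ⟩ := Set.mem_iUnion.1 hx
    rcases DE_carrier_sub_iotaC Q.2.1 hxQ with h | h
    · left
      apply Set.mem_iUnion.2
      refine ⟨⟨iotaC E Q₀ (Q : Cube1), iotaC_mem_comps Q.2.1, ?_⟩, h⟩
      exact le_trans Q.2.2 (DE_l_le_len_iotaC Q.2.1)
    · exact Or.inr h

lemma csumLE_le_sumLE (hE : IsClosed E) (hQ₀ : (Q₀.carrier ∩ E).Nonempty) (L : ℝ) :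
    csumLE E Q₀ L ≤ sumLE E Q₀ L := by
  rw [sumLE, csumLE, (DEsub_repr hQ₀ (fun Q => Q.l ≤ L)).2,
    (compsub_repr hE (fun I => len I ≤ L)).2]
  apply ENNReal.toReal_mono
  · exact (lt_of_le_of_lt (measure_mono (Set.iUnion_subset
      (fun Q => DE_carrier_subset Q.2.1))) (lt_top_iff_ne_top.2 volume_Q₀_ne_top)).ne
  · apply measure_mono
    intro x hx
    obtain ⟨I, hxI⟩ := Set.mem_iUnion.1 hx
    have hxO := comps_subset I.2.1 hxI
    have hxQ₀ : x ∈ Q₀.carrier := interior_subset hxO.1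
    obtain ⟨Q, hQ, hxQ, -⟩ := exists_DE_mem hE hQ₀ hxQ₀ hxO.2
    have hiota : iotaC E Q₀ Q = I := iotaC_eq_of_mem hQ I.2.1 hxQ hxI
    apply Set.mem_iUnion.2
    refine ⟨⟨Q, hQ, ?_⟩, hxQ⟩
    calc Q.l ≤ len (iotaC E Q₀ Q) := DE_l_le_len_iotaC hQ
      _ = len (I : Set ℝ) := by rw [hiota]
      _ ≤ L := I.2.2

lemma union_DE_total (hE : IsClosed E) (hQ₀ : (Q₀.carrier ∩ E).Nonempty)
    (hE0 : volume E = 0) {p : Cube1 → Prop} (hp : ∀ Q ∈ DE E Q₀, p Q) :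
    volume (⋃ Q : {Q : Cube1 // Q ∈ DE E Q₀ ∧ p Q}, (Q : Cube1).carrier)
      = ENNReal.ofReal Q₀.l := by
  apply le_antisymm
  · calc volume (⋃ Q : {Q : Cube1 // Q ∈ DE E Q₀ ∧ p Q}, (Q : Cube1).carrier)
        ≤ volume Q₀.carrier := measure_mono (Set.iUnion_subset (fun Q => DE_carrier_subset Q.2.1))
      _ = ENNReal.ofReal Q₀.l := by unfold Cube1.carrier; rw [Real.volume_Ico]; ring_nf
  · have hcov : Q₀.carrier \ E ⊆ ⋃ Q : {Q : Cube1 // Q ∈ DE E Q₀ ∧ p Q}, (Q : Cube1).carrier := by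
      intro x hx
      obtain ⟨Q, hQ, hxQ, -⟩ := exists_DE_mem hE hQ₀ hx.1 hx.2
      exact Set.mem_iUnion.2 ⟨⟨Q, hQ, hp Q hQ⟩, hxQ⟩
    calc ENNReal.ofReal Q₀.l = volume Q₀.carrier := by
          unfold Cube1.carrier; rw [Real.volume_Ico]; ring_nf
      _ = volume (Q₀.carrier \ E) := (measure_diff_null hE0).symm
      _ ≤ _ := measure_mono hcov

lemma union_comps_total (hE : IsClosed E) (hE0 : volume E = 0)
    {p : Set ℝ → Prop} (hp : ∀ I ∈ comps E Q₀, p I) :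
    volume (⋃ I : {I : Set ℝ // I ∈ comps E Q₀ ∧ p I}, (I : Set ℝ))
      = ENNReal.ofReal Q₀.l := by
  have hU : (⋃ I : {I : Set ℝ // I ∈ comps E Q₀ ∧ p I}, (I : Set ℝ))
      = interior Q₀.carrier \ E := by
    apply Set.Subset.antisymm
    · exact Set.iUnion_subset (fun I => comps_subset I.2.1)
    · intro x hx
      have hmem : connectedComponentIn (interior Q₀.carrier \ E) x ∈ comps E Q₀ :=
        ⟨x, hx, rfl⟩
      exact Set.mem_iUnion.2 ⟨⟨_, hmem, hp _ hmem⟩, mem_connectedComponentIn hx⟩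
  rw [hU, measure_diff_null hE0, interior_carrier, Real.volume_Ioo]
  ring_nf

lemma sumLE_total (hE : IsClosed E) (hQ₀ : (Q₀.carrier ∩ E).Nonempty)
    (hE0 : volume E = 0) : sumLE E Q₀ Q₀.l = Q₀.l := by
  rw [sumLE, (DEsub_repr hQ₀ (fun Q => Q.l ≤ Q₀.l)).2,
    union_DE_total hE hQ₀ hE0 (fun Q hQ => isDyadic_l_le hQ.1.choose_spec),
    ENNReal.toReal_ofReal Q₀.l_pos.le]

lemma sumGE_total (hE : IsClosed E) (hQ₀ : (Q₀.carrier ∩ E).Nonempty)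
    (hE0 : volume E = 0) : sumGE E Q₀ 0 = Q₀.l := by
  rw [sumGE, (DEsub_repr hQ₀ (fun Q => (0:ℝ) ≤ Q.l)).2,
    union_DE_total hE hQ₀ hE0 (fun Q hQ => Q.l_pos.le),
    ENNReal.toReal_ofReal Q₀.l_pos.le]

lemma csumLE_total (hE : IsClosed E) (hE0 : volume E = 0) :
    csumLE E Q₀ Q₀.l = Q₀.l := by
  rw [csumLE, (compsub_repr hE (fun I => len I ≤ Q₀.l)).2,
    union_comps_total hE hE0 (fun I hI => len_le_Q₀ hI),
    ENNReal.toReal_ofReal Q₀.l_pos.le]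

lemma csumGE_total (hE : IsClosed E) (hE0 : volume E = 0) :
    csumGE E Q₀ 0 = Q₀.l := by
  rw [csumGE, (compsub_repr hE (fun I => (0:ℝ) ≤ len I)).2,
    union_comps_total hE hE0 (fun I hI => len_nonneg I),
    ENNReal.toReal_ofReal Q₀.l_pos.le]

end Comparisons

section Claim23

variable {E : Set ℝ} {Q₀ : Cube1}

lemma exists_scale (Q₀ : Cube1) {ε : ℝ} (hε : 0 < ε) : ∃ n : ℕ, Q₀.l / 2 ^ n ≤ ε := by
  have hl := Q₀.l_pos
  obtain ⟨n, hn⟩ := exists_pow_lt_of_lt_one (by positivity : (0:ℝ) < ε / Q₀.l)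
    (by norm_num : (1:ℝ)/2 < 1)
  refine ⟨n, le_of_lt ?_⟩
  have h2 : ((1:ℝ)/2) ^ n = 1 / 2 ^ n := by rw [div_pow]; norm_num
  rw [h2, div_lt_div_iff₀ (by positivity) hl] at hn
  rw [div_lt_iff₀ (by positivity : (0:ℝ) < 2 ^ n)]
  nlinarith

lemma exists_big_cube (hE : IsClosed E) (hQ₀ : (Q₀.carrier ∩ E).Nonempty)
    {I : Set ℝ} (hI : I ∈ comps E Q₀) :
    ∃ Q ∈ DE E Q₀, iotaC E Q₀ Q = I ∧ len I ≤ 4 * Q.l := by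
  obtain ⟨α, β, hα, hab, hβ, hIeq⟩ := comps_struct hE hI
  have hl := Q₀.l_pos
  have hba : β - α ≤ Q₀.l := by linarith
  have hex : ∃ j : ℕ, Q₀.l / 2 ^ j ≤ (β - α) / 2 := exists_scale Q₀ (by linarith)
  classical
  obtain ⟨j, hspec, hmin0⟩ : ∃ j, (Q₀.l / 2 ^ j ≤ (β - α) / 2) ∧
      ∀ i < j, ¬(Q₀.l / 2 ^ i ≤ (β - α) / 2) :=
    ⟨Nat.find hex, Nat.find_spec hex, fun i hi => Nat.find_min hex hi⟩
  have hjne : j ≠ 0 := by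
    intro h0
    subst h0
    norm_num at hspec
    linarith
  obtain ⟨m, hm⟩ : ∃ m, j = m + 1 := ⟨j - 1, by omega⟩
  have hmin : ¬ (Q₀.l / 2 ^ m ≤ (β - α) / 2) := hmin0 m (by omega)
  push_neg at hmin
  set lj : ℝ := Q₀.l / 2 ^ j with hlj
  have hljpos : 0 < lj := by rw [hlj]; positivity
  have hlj4 : (β - α) / 4 < lj := by
    have : Q₀.l / 2 ^ m = 2 * lj := by
      rw [hlj, hm, pow_succ]
      field_simp
    rw [this] at hmin
    linarith
  set k : ℕ := ⌊(α - Q₀.a) / lj⌋₊ + 1 with hk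
  have hy0 : 0 ≤ (α - Q₀.a) / lj := div_nonneg (by linarith) hljpos.le
  have hfl : (⌊(α - Q₀.a) / lj⌋₊ : ℝ) * lj ≤ α - Q₀.a := by
    have := Nat.floor_le hy0
    calc (⌊(α - Q₀.a) / lj⌋₊ : ℝ) * lj ≤ ((α - Q₀.a) / lj) * lj := by nlinarith
      _ = α - Q₀.a := by field_simp
  have hfu : α - Q₀.a < (k : ℝ) * lj := by
    have h1 := Nat.lt_floor_add_one ((α - Q₀.a) / lj)
    have : (α - Q₀.a) = ((α - Q₀.a) / lj) * lj := by field_simp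
    rw [this, hk]
    push_cast
    nlinarith
  have hkb : (k : ℝ) * lj ≤ (α - Q₀.a) + lj := by
    rw [hk]; push_cast; nlinarith
  have hCa : Q₀.a + (k : ℝ) * lj ≤ α + lj := by linarith
  have hk2j : k < 2 ^ j := by
    have h1 : Q₀.a + (k:ℝ) * lj < Q₀.a + Q₀.l := by
      have : lj ≤ (β - α)/2 := hspec
      have : α + lj < β := by linarith
      linarith [hCa, hβ]
    have h2 : (k:ℝ) * lj < (2:ℝ) ^ j * lj := by
      have : (2:ℝ) ^ j * lj = Q₀.l := by rw [hlj]; field_simp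
      linarith [h1, this]
    have : (k:ℝ) < (2:ℝ) ^ j := lt_of_mul_lt_mul_right h2 hljpos.le
    exact_mod_cast this
  set C : Cube1 := ⟨Q₀.a + (k : ℝ) * Q₀.l / 2 ^ j, Q₀.l / 2 ^ j, by positivity⟩ with hC
  have hCd : IsDyadic Q₀ C j := ⟨rfl, k, hk2j, rfl⟩
  have hCeq : C.a = Q₀.a + (k : ℝ) * lj := by
    show Q₀.a + (k : ℝ) * Q₀.l / 2 ^ j = _
    rw [hlj]; ring
  have hCl : C.l = lj := rfl
  have hCI : C.carrier ⊆ I := by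
    rw [hIeq]
    intro y hy
    obtain ⟨h1, h2⟩ := Cube1.mem_carrier.1 hy
    rw [hCeq] at h1
    rw [hCeq, hCl] at h2
    constructor
    · linarith [hfu]
    · have : lj ≤ (β - α)/2 := hspec
      linarith [hCa]
  have hx : C.a ∈ C.carrier := ⟨le_refl _, by linarith [C.l_pos]⟩
  have hxI : C.a ∈ I := hCI hx
  have hxO := comps_subset hI hxI
  have hxQ₀ : C.a ∈ Q₀.carrier := interior_subset hxO.1
  have hCfree : C.carrier ∩ E = ∅ := by
    rw [Set.eq_empty_iff_forall_notMem]
    intro y ⟨hy1, hy2⟩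
    exact (comps_subset hI (hCI hy1)).2 hy2
  obtain ⟨Q, hQDE, hxQ, hmaxp⟩ := exists_DE_mem hE hQ₀ hxQ₀ hxO.2
  have hCg : C = gcube Q₀ j C.a := gcube_unique hCd hx
  obtain ⟨hlle, -⟩ := hmaxp j (by rw [← hCg]; exact hCfree)
  rw [← hCg] at hlle
  refine ⟨Q, hQDE, iotaC_eq_of_mem hQDE hI hxQ hxI, ?_⟩
  rw [hIeq, len_Ioo hab.le]
  rw [hCl] at hlle
  linarith [hlj4, hlle]

lemma whitney (hE : IsClosed E) (hQ₀ : (Q₀.carrier ∩ E).Nonempty)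
    {Q : Cube1} (hQ : Q ∈ DE E Q₀) {α β : ℝ}
    (hIoo : iotaC E Q₀ Q = Set.Ioo α β) :
    Q.carrier ⊆ Set.Icc α (α + 3*Q.l) ∪ Set.Icc (β - 3*Q.l) β := by
  have hsub := DE_carrier_subset hQ
  have hlp := Q.l_pos
  have hend : Q₀.a ≤ Q.a ∧ Q.a + Q.l ≤ Q₀.a + Q₀.l := by
    have := (Set.Ico_subset_Ico_iff (by linarith : Q.a < Q.a + Q.l)).1 hsub
    exact this
  have h1 : Set.Ioo (max Q.a Q₀.a) (Q.a + Q.l) ⊆ Set.Ioo α β := by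
    intro y hy
    rw [← hIoo]
    apply DE_carrier_inter_sub hQ
    refine ⟨⟨le_of_lt (lt_of_le_of_lt (le_max_left _ _) hy.1), hy.2⟩, ?_⟩
    rw [interior_carrier]
    exact ⟨lt_of_le_of_lt (le_max_right _ _) hy.1, lt_of_lt_of_le hy.2 hend.2⟩
  have hne : max Q.a Q₀.a < Q.a + Q.l := max_lt (by linarith) (by linarith [hend.1])
  have hbounds := (Set.Ioo_subset_Ioo_iff hne).1 h1
  have hmax_eq : max Q.a Q₀.a = Q.a := max_eq_left hend.1
  rw [hmax_eq] at hbounds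
  obtain ⟨hαa, hab2⟩ := hbounds
  obtain ⟨P, hPar, hPl, w, hwP, hwE⟩ := DE_parent hQ₀ hQ
  obtain ⟨m, hQd, hPd, hQPsub⟩ := hPar
  have hwI : w ∉ Set.Ioo α β := by
    rw [← hIoo]
    intro hw
    exact (comps_subset (iotaC_mem_comps hQ) hw).2 hwE
  have hw' : w ≤ α ∨ β ≤ w := by
    by_contra h
    push_neg at h
    exact hwI ⟨h.1, h.2⟩
  intro y hy
  have hdiam : |y - w| < 2 * Q.l := by
    have := carrier_diam hwP (hQPsub hy)
    rwa [hPl] at this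
  rw [abs_lt] at hdiam
  obtain ⟨hya, hyb⟩ := Cube1.mem_carrier.1 hy
  rcases hw' with h | h
  · left
    exact ⟨by linarith, by linarith⟩
  · right
    exact ⟨by linarith, by linarith⟩

end Claim23

section Claim3

variable {E : Set ℝ} {Q₀ : Cube1}

/-- The union of small cubes attached to a fixed component. -/
noncomputable def Wset (E : Set ℝ) (Q₀ : Cube1) (I : Set ℝ) (L : ℝ) : Set ℝ :=
  ⋃ Q : {Q : Cube1 // Q ∈ DE E Q₀ ∧ iotaC E Q₀ Q = I ∧ Q.l ≤ L}, (Q : Cube1).carrier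

lemma Wset_subset_comp {I : Set ℝ} {L : ℝ} :
    Wset E Q₀ I L ⊆ I ∪ {Q₀.a} := by
  apply Set.iUnion_subset
  intro Q
  have h := DE_carrier_sub_iotaC Q.2.1
  rw [Q.2.2.1] at h
  exact h

lemma Wset_measurable {I : Set ℝ} {L : ℝ} : MeasurableSet (Wset E Q₀ I L) := by
  haveI := countable_subDE (E := E) (Q₀ := Q₀) (fun Q => iotaC E Q₀ Q = I ∧ Q.l ≤ L)
  exact MeasurableSet.iUnion (fun Q => measurableSet_Ico)

lemma Wset_bound (hE : IsClosed E) (hQ₀ : (Q₀.carrier ∩ E).Nonempty)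
    {I : Set ℝ} (hI : I ∈ comps E Q₀) {L : ℝ} (hL : 0 ≤ L) :
    len (Wset E Q₀ I L) ≤ 6 * L := by
  obtain ⟨α, β, -, hab, -, hIeq⟩ := comps_struct hE hI
  have hsub : Wset E Q₀ I L ⊆ Set.Icc α (α + 3*L) ∪ Set.Icc (β - 3*L) β := by
    apply Set.iUnion_subset
    intro Q
    have hw := whitney hE hQ₀ Q.2.1 (by rw [Q.2.2.1, hIeq])
    have hlL := Q.2.2.2
    intro y hy
    rcases hw hy with h | h
    · exact Or.inl ⟨h.1, by linarith [h.2]⟩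
    · exact Or.inr ⟨by linarith [h.1], h.2⟩
  have hμ : volume (Wset E Q₀ I L) ≤ ENNReal.ofReal (3*L) + ENNReal.ofReal (3*L) := by
    calc volume (Wset E Q₀ I L)
        ≤ volume (Set.Icc α (α + 3*L) ∪ Set.Icc (β - 3*L) β) := measure_mono hsub
      _ ≤ volume (Set.Icc α (α + 3*L)) + volume (Set.Icc (β - 3*L) β) := measure_union_le _ _
      _ = ENNReal.ofReal (3*L) + ENNReal.ofReal (3*L) := by
          rw [Real.volume_Icc, Real.volume_Icc]
          ring_nf
  have : volume (Wset E Q₀ I L) ≤ ENNReal.ofReal (6*L) := by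
    rw [← ENNReal.ofReal_add (by linarith) (by linarith)] at hμ
    convert hμ using 2
    ring
  exact ENNReal.toReal_le_of_le_ofReal (by linarith) this

lemma sumLE_split (hE : IsClosed E) (hQ₀ : (Q₀.carrier ∩ E).Nonempty)
    (hE0 : volume E = 0) {L ε : ℝ} (hL : 0 ≤ L) (hε : 0 < ε) :
    sumLE E Q₀ L ≤ csumLE E Q₀ ε + (6*L/ε) * Q₀.l := by
  classical
  haveI hcc : Countable {I : Set ℝ // I ∈ comps E Q₀} :=
    (comps_countable E Q₀ hE).to_subtype
  -- step (a): sumLE L = ∑' over components of len (Wset I L)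
  have key := key_sum (fun I : {I : Set ℝ // I ∈ comps E Q₀} => Wset E Q₀ (I : Set ℝ) L)
    (fun I => Wset_measurable)
    (by
      intro I I' hne
      rw [Function.onFun, Set.disjoint_left]
      intro x hx hx'
      obtain ⟨Q, hxQ⟩ := Set.mem_iUnion.1 hx
      obtain ⟨Q', hxQ'⟩ := Set.mem_iUnion.1 hx'
      by_cases hQQ : (Q : Cube1) = (Q' : Cube1)
      · apply hne
        apply Subtype.ext
        rw [← Q.2.2.1, ← Q'.2.2.1, hQQ]
      · exact Set.disjoint_left.1 (DE_disjoint hQ₀ Q.2.1 Q'.2.1 hQQ) hxQ hxQ')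
    (fun I => subset_trans Wset_subset_comp (by
      intro y hy
      rcases hy with h | h
      · exact comps_subset_Q₀ I.2 h
      · rw [Set.mem_singleton_iff] at h
        subst h
        exact ⟨le_refl _, by linarith [Q₀.l_pos]⟩))
    volume_Q₀_ne_top
  have hUeq : (⋃ I : {I : Set ℝ // I ∈ comps E Q₀}, Wset E Q₀ (I : Set ℝ) L)
      = ⋃ Q : {Q : Cube1 // Q ∈ DE E Q₀ ∧ Q.l ≤ L}, (Q : Cube1).carrier := by
    apply Set.Subset.antisymm
    · apply Set.iUnion_subset
      intro I
      apply Set.iUnion_subset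
      intro Q
      exact Set.subset_iUnion_of_subset ⟨Q, Q.2.1, Q.2.2.2⟩ (le_refl _)
    · apply Set.iUnion_subset
      intro Q
      apply Set.subset_iUnion_of_subset ⟨iotaC E Q₀ (Q : Cube1), iotaC_mem_comps Q.2.1⟩
      exact Set.subset_iUnion_of_subset ⟨(Q : Cube1), Q.2.1, rfl, Q.2.2⟩ (le_refl _)
  have hstepa : sumLE E Q₀ L
      = ∑' I : {I : Set ℝ // I ∈ comps E Q₀}, len (Wset E Q₀ (I : Set ℝ) L) := by
    rw [sumLE, (DEsub_repr hQ₀ (fun Q => Q.l ≤ L)).2, key.2, hUeq]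
  -- step (b): split into small and large components
  set s : Set {I : Set ℝ // I ∈ comps E Q₀} := {I | len (I : Set ℝ) ≤ ε} with hs
  have hsplit := Summable.tsum_subtype_add_tsum_subtype_compl key.1 s
  -- step (c): small part
  have hsmall : ∑' (I : s), len (Wset E Q₀ ((I : {I : Set ℝ // I ∈ comps E Q₀}) : Set ℝ) L)
      ≤ csumLE E Q₀ ε := by
    rw [csumLE]
    apply Summable.tsum_le_tsum_of_inj
      (fun I : s => (⟨(I : {I : Set ℝ // I ∈ comps E Q₀}), (I : {I : Set ℝ // I ∈ comps E Q₀}).2, I.2⟩ :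
        {I : Set ℝ // I ∈ comps E Q₀ ∧ len I ≤ ε}))
    · intro a b hab
      simp only [Subtype.mk.injEq] at hab
      exact Subtype.ext (Subtype.ext hab)
    · intro c _
      exact len_nonneg _
    · intro b
      exact toReal_mono_union_pt (pt := Q₀.a)
        ((lt_of_le_of_lt (measure_mono (comps_subset_Q₀ (b : {I : Set ℝ // I ∈ comps E Q₀}).2))
          (lt_top_iff_ne_top.2 volume_Q₀_ne_top)).ne)
        (by
          have := Wset_subset_comp (E := E) (Q₀ := Q₀)
            (I := ((b : {I : Set ℝ // I ∈ comps E Q₀}) : Set ℝ)) (L := L)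
          exact this)
    · exact key.1.subtype s
    · exact (compsub_repr hE (fun I => len I ≤ ε)).1
  -- step (d): large part
  have hlarge : ∑' (I : ↥sᶜ), len (Wset E Q₀ ((I : {I : Set ℝ // I ∈ comps E Q₀}) : Set ℝ) L)
      ≤ (6*L/ε) * Q₀.l := by
    have h1 : ∑' (I : ↥sᶜ), len (Wset E Q₀ ((I : {I : Set ℝ // I ∈ comps E Q₀}) : Set ℝ) L)
        ≤ ∑' I : {I : Set ℝ // I ∈ comps E Q₀ ∧ len I ≤ Q₀.l}, (6*L/ε) * len (I : Set ℝ) := by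
      apply Summable.tsum_le_tsum_of_inj
        (fun I : ↥sᶜ => (⟨((I : {I : Set ℝ // I ∈ comps E Q₀}) : Set ℝ),
          (I : {I : Set ℝ // I ∈ comps E Q₀}).2,
          len_le_Q₀ (I : {I : Set ℝ // I ∈ comps E Q₀}).2⟩ :
          {I : Set ℝ // I ∈ comps E Q₀ ∧ len I ≤ Q₀.l}))
      · intro a b hab
        simp only [Subtype.mk.injEq] at hab
        exact Subtype.ext (Subtype.ext hab)
      · intro c _
        have := len_nonneg (c : Set ℝ)
        have h6 : 0 ≤ 6*L/ε := by positivity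
        positivity
      · intro b
        have hgt : ε < len ((b : {I : Set ℝ // I ∈ comps E Q₀}) : Set ℝ) := by
          have hb : (b : {I : Set ℝ // I ∈ comps E Q₀}) ∉ s := b.2
          exact not_le.1 hb
        calc len (Wset E Q₀ ((b : {I : Set ℝ // I ∈ comps E Q₀}) : Set ℝ) L)
            ≤ 6 * L := Wset_bound hE hQ₀ (b : {I : Set ℝ // I ∈ comps E Q₀}).2 hL
          _ = (6*L/ε) * ε := by field_simp
          _ ≤ (6*L/ε) * len ((b : {I : Set ℝ // I ∈ comps E Q₀}) : Set ℝ) := by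
              apply mul_le_mul_of_nonneg_left hgt.le (by positivity)
      · exact key.1.subtype sᶜ
      · exact ((compsub_repr hE (fun I => len I ≤ Q₀.l)).1).mul_left _
    have h2 : ∑' I : {I : Set ℝ // I ∈ comps E Q₀ ∧ len I ≤ Q₀.l}, (6*L/ε) * len (I : Set ℝ)
        = (6*L/ε) * Q₀.l := by
      rw [tsum_mul_left]
      congr 1
      exact csumLE_total hE hE0
    linarith [h1, h2.le]
  calc sumLE E Q₀ L = _ := hstepa
    _ = _ + _ := hsplit.symm
    _ ≤ csumLE E Q₀ ε + (6*L/ε) * Q₀.l := add_le_add hsmall hlarge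

end Claim3

section Claim2

variable {E : Set ℝ} {Q₀ : Cube1}

noncomputable def Vset (E : Set ℝ) (Q₀ : Cube1) (I : Set ℝ) (L : ℝ) : Set ℝ :=
  ⋃ Q : {Q : Cube1 // Q ∈ DE E Q₀ ∧ iotaC E Q₀ Q = I ∧ L ≤ Q.l}, (Q : Cube1).carrier

lemma Vset_measurable {I : Set ℝ} {L : ℝ} : MeasurableSet (Vset E Q₀ I L) := by
  haveI := countable_subDE (E := E) (Q₀ := Q₀) (fun Q => iotaC E Q₀ Q = I ∧ L ≤ Q.l)
  exact MeasurableSet.iUnion (fun Q => measurableSet_Ico)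

lemma Vset_subset_Q₀ {I : Set ℝ} {L : ℝ} : Vset E Q₀ I L ⊆ Q₀.carrier :=
  Set.iUnion_subset (fun Q => DE_carrier_subset Q.2.1)

lemma csumGE_le_4sumGE (hE : IsClosed E) (hQ₀ : (Q₀.carrier ∩ E).Nonempty)
    {L : ℝ} (hL : 0 ≤ L) : csumGE E Q₀ L ≤ 4 * sumGE E Q₀ (L/4) := by
  classical
  haveI := countable_subComps (E := E) (Q₀ := Q₀) hE (fun I => L ≤ len I)
  have key := key_sum
    (fun I : {I : Set ℝ // I ∈ comps E Q₀ ∧ L ≤ len I} => Vset E Q₀ (I : Set ℝ) (L/4))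
    (fun I => Vset_measurable)
    (by
      intro I I' hne
      rw [Function.onFun, Set.disjoint_left]
      intro x hx hx'
      obtain ⟨Q, hxQ⟩ := Set.mem_iUnion.1 hx
      obtain ⟨Q', hxQ'⟩ := Set.mem_iUnion.1 hx'
      by_cases hQQ : (Q : Cube1) = (Q' : Cube1)
      · apply hne
        apply Subtype.ext
        rw [← Q.2.2.1, ← Q'.2.2.1, hQQ]
      · exact Set.disjoint_left.1 (DE_disjoint hQ₀ Q.2.1 Q'.2.1 hQQ) hxQ hxQ')
    (fun I => Vset_subset_Q₀) volume_Q₀_ne_top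
  have hterm : ∀ I : {I : Set ℝ // I ∈ comps E Q₀ ∧ L ≤ len I},
      len (I : Set ℝ) ≤ 4 * len (Vset E Q₀ (I : Set ℝ) (L/4)) := by
    intro I
    obtain ⟨Q, hQDE, hiota, hlen⟩ := exists_big_cube hE hQ₀ I.2.1
    have hQl4 : L/4 ≤ Q.l := by
      have := I.2.2
      linarith
    have hQsub : Q.carrier ⊆ Vset E Q₀ (I : Set ℝ) (L/4) :=
      Set.subset_iUnion_of_subset ⟨Q, hQDE, hiota, hQl4⟩ (le_refl _)
    have hQV : Q.l ≤ len (Vset E Q₀ (I : Set ℝ) (L/4)) := by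
      rw [← len_carrier Q]
      apply ENNReal.toReal_mono
      · exact (lt_of_le_of_lt (measure_mono (Vset_subset_Q₀ (I := (I : Set ℝ)) (L := L/4)))
          (lt_top_iff_ne_top.2 volume_Q₀_ne_top)).ne
      · exact measure_mono hQsub
    linarith
  have h1 : csumGE E Q₀ L
      ≤ ∑' I : {I : Set ℝ // I ∈ comps E Q₀ ∧ L ≤ len I},
          4 * len (Vset E Q₀ (I : Set ℝ) (L/4)) := by
    rw [csumGE]
    exact Summable.tsum_le_tsum hterm (compsub_repr hE (fun I => L ≤ len I)).1 (key.1.mul_left 4)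
  have h2 : ∑' I : {I : Set ℝ // I ∈ comps E Q₀ ∧ L ≤ len I},
      4 * len (Vset E Q₀ (I : Set ℝ) (L/4)) ≤ 4 * sumGE E Q₀ (L/4) := by
    rw [tsum_mul_left]
    apply mul_le_mul_of_nonneg_left _ (by norm_num : (0:ℝ) ≤ 4)
    rw [key.2, sumGE, (DEsub_repr hQ₀ (fun Q => L/4 ≤ Q.l)).2]
    apply ENNReal.toReal_mono
    · exact (lt_of_le_of_lt (measure_mono (Set.iUnion_subset
        (fun Q => DE_carrier_subset Q.2.1))) (lt_top_iff_ne_top.2 volume_Q₀_ne_top)).ne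
    · apply measure_mono
      apply Set.iUnion_subset
      intro I
      apply Set.iUnion_subset
      intro Q
      exact Set.subset_iUnion_of_subset ⟨Q, Q.2.1, Q.2.2.2⟩ (le_refl _)
  linarith

end Claim2

section Final

variable {E : Set ℝ} {Q₀ : Cube1}

lemma vol_eq : Q₀.vol = Q₀.l := rfl

lemma csumGE_zero_of_big (hE : IsClosed E) {L : ℝ} (hL : Q₀.l < L) :
    csumGE E Q₀ L = 0 := by
  have hempty : IsEmpty {I : Set ℝ // I ∈ comps E Q₀ ∧ L ≤ len I} := by
    constructor
    intro I
    have := len_le_Q₀ I.2.1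
    linarith [I.2.2]
  rw [csumGE]
  exact tsum_empty

lemma sumGE_zero_of_big {L : ℝ} (hL : Q₀.l < L) : sumGE E Q₀ L = 0 := by
  have hempty : IsEmpty {Q : Cube1 // Q ∈ DE E Q₀ ∧ L ≤ Q.l} := by
    constructor
    intro Q
    have := isDyadic_l_le Q.2.1.1.choose_spec
    linarith [Q.2.2]
  rw [sumGE]
  exact tsum_empty

lemma bddAbove_Lset {t : ℝ} (ht : 0 < t) : BddAbove (Lset t Q₀ E) := by
  refine ⟨Q₀.l, fun L hL => ?_⟩
  by_contra h
  push_neg at h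
  have h0 := sumGE_zero_of_big (E := E) h
  have := hL.2
  rw [h0, vol_eq] at this
  nlinarith [Q₀.l_pos]

lemma bddAbove_LsetC (hE : IsClosed E) {t : ℝ} (ht : 0 < t) :
    BddAbove {L | 0 ≤ L ∧ t * Q₀.vol ≤ csumGE E Q₀ L} := by
  refine ⟨Q₀.l, fun L hL => ?_⟩
  by_contra h
  push_neg at h
  have h0 := csumGE_zero_of_big (E := E) hE h
  have := hL.2
  rw [h0, vol_eq] at this
  nlinarith [Q₀.l_pos]

theorem stmt18' (hE : IsClosed E) (hne : E.Nonempty)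
    (hE0 : volume E = 0) (hQ₀ : (Q₀.carrier ∩ E).Nonempty)
    (t t' : ℝ) (ht' : 0 < t') (ht't : t' < t) (ht : t < 1) :
    Lfun E Q₀ t ≤ Ltil E Q₀ t ∧ Ltil E Q₀ t ≤ 4 * Lfun E Q₀ (t / 4) ∧
    (∃ C : ℝ, 0 < C ∧ C * Stil E Q₀ t' ≤ Sfun E Q₀ t) ∧
    Sfun E Q₀ t ≤ Stil E Q₀ t := by
  have hl := Q₀.l_pos
  have ht0 : 0 < t := lt_trans ht' ht't
  have h0L : (0:ℝ) ∈ Lset t Q₀ E := by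
    refine ⟨le_refl _, ?_⟩
    rw [vol_eq, sumGE_total hE hQ₀ hE0]
    nlinarith
  have h0LC : (0:ℝ) ∈ {L | 0 ≤ L ∧ t * Q₀.vol ≤ csumGE E Q₀ L} := by
    refine ⟨le_refl _, ?_⟩
    rw [vol_eq, csumGE_total hE hE0]
    nlinarith
  have hQlS : Q₀.l ∈ Sset t Q₀ E := by
    refine ⟨hl.le, ?_⟩
    rw [vol_eq, sumLE_total hE hQ₀ hE0]
    nlinarith
  have hQlSC : Q₀.l ∈ {L | 0 ≤ L ∧ t * Q₀.vol ≤ csumLE E Q₀ L} := by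
    refine ⟨hl.le, ?_⟩
    rw [vol_eq, csumLE_total hE hE0]
    nlinarith
  refine ⟨?_, ?_, ?_, ?_⟩
  -- Claim 1
  · apply csSup_le_csSup (bddAbove_LsetC hE ht0) ⟨0, h0L⟩
    intro L hL
    exact ⟨hL.1, le_trans hL.2 (sumGE_le_csumGE hE hQ₀ L)⟩
  -- Claim 2
  · apply csSup_le ⟨0, h0LC⟩
    intro L hL
    have hL4 : L/4 ∈ Lset (t/4) Q₀ E := by
      refine ⟨by linarith [hL.1], ?_⟩
      have h1 : t * Q₀.vol ≤ csumGE E Q₀ L := hL.2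
      have h2 := csumGE_le_4sumGE hE hQ₀ hL.1
      rw [vol_eq] at *
      nlinarith
    have := le_csSup (bddAbove_Lset (by linarith : (0:ℝ) < t/4)) hL4
    have h4 : L/4 ≤ Lfun E Q₀ (t/4) := this
    linarith
  -- Claim 3
  · have hSfun0 : 0 ≤ Sfun E Q₀ t := le_csInf ⟨Q₀.l, hQlS⟩ (fun L hL => hL.1)
    rcases le_or_gt (Stil E Q₀ t') 0 with hst | hst
    · exact ⟨1, one_pos, by rw [one_mul]; linarith⟩
    · have hSpos : 0 < Sfun E Q₀ t := by
        rcases lt_or_eq_of_le hSfun0 with h | h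
        · exact h
        · exfalso
          -- Sfun t = 0; show Stil t' ≤ ε for all ε > 0
          have hkey : ∀ ε : ℝ, 0 < ε → Stil E Q₀ t' ≤ ε := by
            intro ε hε
            set δ := (t - t') * ε / 6 with hδ
            have hδpos : 0 < δ := by
              rw [hδ]
              have h6 : 0 < t - t' := by linarith
              positivity
            have hlt : sInf (Sset t Q₀ E) < δ := by
              rw [Sfun] at h
              rw [← h]
              exact hδpos
            obtain ⟨L, hLmem, hLδ⟩ := exists_lt_of_csInf_lt ⟨Q₀.l, hQlS⟩ hlt
            have hL0 : 0 ≤ L := hLmem.1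
            have hchain : t * Q₀.l ≤ csumLE E Q₀ ε + (6*L/ε) * Q₀.l := by
              have h1 : t * Q₀.l ≤ sumLE E Q₀ L := by
                have := hLmem.2
                rwa [vol_eq] at this
              linarith [sumLE_split hE hQ₀ hE0 hL0 hε]
            have hsmall : (6*L/ε) * Q₀.l < (t - t') * Q₀.l := by
              apply mul_lt_mul_of_pos_right _ hl
              rw [div_lt_iff₀ hε]
              rw [hδ] at hLδ
              nlinarith
            have hmem : ε ∈ {L | 0 ≤ L ∧ t' * Q₀.vol ≤ csumLE E Q₀ L} := by
              refine ⟨hε.le, ?_⟩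
              rw [vol_eq]
              nlinarith [csumLE_total (E := E) (Q₀ := Q₀) hE hE0]
            exact csInf_le ⟨0, fun x hx => hx.1⟩ hmem
          have : Stil E Q₀ t' ≤ Stil E Q₀ t' / 2 := hkey _ (by linarith)
          linarith
      refine ⟨Sfun E Q₀ t / Stil E Q₀ t', div_pos hSpos hst, ?_⟩
      rw [div_mul_cancel₀ _ hst.ne']
  -- Claim 4
  · apply csInf_le_csInf ⟨0, fun L hL => hL.1⟩ ⟨Q₀.l, hQlSC⟩
    intro L hL
    exact ⟨hL.1, le_trans hL.2 (csumLE_le_sumLE hE hQ₀ L)⟩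

end Final


/-- Comparison between the dyadic quantities `𝓛_{Q₀}, 𝓢_{Q₀}` and their
connected-component analogues `L̃_{Q₀}, S̃_{Q₀}` in `ℝ`. -/
theorem stmt18 (E : Set ℝ) (hE : IsClosed E) (hne : E.Nonempty)
    (hE0 : volume E = 0) (Q₀ : Cube1) (hQ₀ : (Q₀.carrier ∩ E).Nonempty)
    (t t' : ℝ) (ht' : 0 < t') (ht't : t' < t) (ht : t < 1) :
    Lfun E Q₀ t ≤ Ltil E Q₀ t ∧ Ltil E Q₀ t ≤ 4 * Lfun E Q₀ (t / 4) ∧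
    (∃ C : ℝ, 0 < C ∧ C * Stil E Q₀ t' ≤ Sfun E Q₀ t) ∧
    Sfun E Q₀ t ≤ Stil E Q₀ t := by
  exact stmt18' hE hne hE0 hQ₀ t t' ht' ht't ht
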